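/- Let n ≥ 1 and β > 0, and let ν_β be the measure on ℝ^n with dν_β(x) = min{1,|x|^{−β}} dx. For every axis-parallel cube K ⊂ ℝ^n with center c and side length ℓ > 0 satisfying |c| ≥ 2√n·ℓ, one has ν_β(2K) ≤ 2^n·(5/2)^β·ν_β(K), where 2K denotes the cube with the same center and side length 2ℓ. -/

import Mathlib

open MeasureTheory ENNReal

/-- The measure `dν_β(x) = min{1, |x|^{-β}} dx` on `ℝⁿ`. -/
noncomputable def nuMeas (n : ℕ) (β : ℝ) : Measure (EuclideanSpace ℝ (Fin n)) :=
  volume.withDensity fun x => ENNReal.ofReal (min 1 (‖x‖ ^ (-β)))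

/-- The axis-parallel cube with center `c` and side length `ℓ`. -/
def cubeC (n : ℕ) (c : EuclideanSpace ℝ (Fin n)) (ℓ : ℝ) :
    Set (EuclideanSpace ℝ (Fin n)) :=
  {x | ∀ i, |x i - c i| ≤ ℓ / 2}

lemma cubeC_eq (n : ℕ) (c : EuclideanSpace ℝ (Fin n)) (L : ℝ) :
    cubeC n c L = (MeasurableEquiv.toLp 2 (Fin n → ℝ)).symm ⁻¹'
      (Set.univ.pi fun i => Set.Icc (c i - L / 2) (c i + L / 2)) := by
  ext x
  simp only [cubeC, Set.mem_setOf_eq, Set.mem_preimage, Set.mem_pi, Set.mem_univ,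
    Set.mem_Icc, forall_true_left]
  refine forall_congr' fun i => ?_
  rw [abs_le]
  show -(L / 2) ≤ x i - c i ∧ x i - c i ≤ L / 2 ↔ c i - L / 2 ≤ x i ∧ x i ≤ c i + L / 2
  constructor <;> intro h <;> exact ⟨by linarith [h.1, h.2], by linarith [h.1, h.2]⟩

lemma cubeC_measurable (n : ℕ) (c : EuclideanSpace ℝ (Fin n)) (L : ℝ) :
    MeasurableSet (cubeC n c L) := by
  rw [cubeC_eq]
  exact (MeasurableEquiv.measurable _) (MeasurableSet.univ_pi fun i => measurableSet_Icc)

lemma cubeC_volume (n : ℕ) (c : EuclideanSpace ℝ (Fin n)) (L : ℝ) :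
    volume (cubeC n c L) = ENNReal.ofReal L ^ n := by
  rw [cubeC_eq, (EuclideanSpace.volume_preserving_symm_measurableEquiv_toLp (Fin n)).measure_preimage
    ((MeasurableSet.univ_pi fun i => measurableSet_Icc).nullMeasurableSet)]
  rw [volume_pi_pi]
  have h : ∀ i : Fin n, c i + L / 2 - (c i - L / 2) = L := fun i => by ring
  simp [Real.volume_Icc, h]

lemma norm_sub_le_of_mem_cubeC (n : ℕ) (c : EuclideanSpace ℝ (Fin n)) (L : ℝ) (hL : 0 ≤ L)
    {x : EuclideanSpace ℝ (Fin n)} (hx : x ∈ cubeC n c L) :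
    ‖x - c‖ ≤ Real.sqrt n * (L / 2) := by
  rw [EuclideanSpace.norm_eq]
  have h : ∑ i, ‖(x - c) i‖ ^ 2 ≤ (n : ℝ) * (L / 2) ^ 2 := by
    calc ∑ i, ‖(x - c) i‖ ^ 2 ≤ ∑ _i : Fin n, (L / 2) ^ 2 := by
          refine Finset.sum_le_sum fun i _ => ?_
          have h1 : ‖(x - c) i‖ ≤ L / 2 := by
            simpa [Real.norm_eq_abs] using hx i
          exact pow_le_pow_left₀ (norm_nonneg _) h1 2
      _ = (n : ℝ) * (L / 2) ^ 2 := by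
          rw [Finset.sum_const, Finset.card_univ, Fintype.card_fin, nsmul_eq_mul]
  calc Real.sqrt (∑ i, ‖(x - c) i‖ ^ 2) ≤ Real.sqrt ((n : ℝ) * (L / 2) ^ 2) :=
        Real.sqrt_le_sqrt h
    _ = Real.sqrt n * (L / 2) := by
        rw [Real.sqrt_mul (Nat.cast_nonneg n), Real.sqrt_sq (by linarith)]

lemma key_real (β : ℝ) (hβ : 0 < β) {a b : ℝ} (ha : 0 < a) (hb : 0 < b)
    (hba : b ≤ 5 / 2 * a) :
    min 1 (a ^ (-β)) ≤ (5 / 2 : ℝ) ^ β * min 1 (b ^ (-β)) := by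
  have h52 : (1 : ℝ) ≤ (5 / 2 : ℝ) ^ β :=
    Real.one_le_rpow (by norm_num) hβ.le
  have h2 : a ^ (-β) ≤ (5 / 2 : ℝ) ^ β * b ^ (-β) := by
    have hmono := Real.rpow_le_rpow_of_nonpos hb hba (neg_nonpos.mpr hβ.le)
    calc a ^ (-β) = (5 / 2 : ℝ) ^ β * ((5 / 2 : ℝ) ^ (-β) * a ^ (-β)) := by
          rw [← mul_assoc, ← Real.rpow_add (by norm_num), add_neg_cancel, Real.rpow_zero,
            one_mul]
      _ = (5 / 2 : ℝ) ^ β * (5 / 2 * a) ^ (-β) := by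
          rw [Real.mul_rpow (by norm_num) ha.le]
      _ ≤ (5 / 2 : ℝ) ^ β * b ^ (-β) :=
          mul_le_mul_of_nonneg_left hmono (Real.rpow_nonneg (by norm_num) _)
  rw [mul_min_of_nonneg _ _ (by positivity : (0:ℝ) ≤ (5/2:ℝ) ^ β), mul_one]
  exact le_min (min_le_of_left_le h52) (min_le_of_right_le h2)

/-- doubling away from the origin.  For every cube `K` with center `c`
and side length `ℓ > 0` such that `|c| ≥ 2√n·ℓ`, one has
`ν_β(2K) ≤ 2ⁿ (5/2)^β ν_β(K)`. -/
theorem statement16 (n : ℕ) (hn : 1 ≤ n) (β : ℝ) (hβ : 0 < β)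
    (c : EuclideanSpace ℝ (Fin n)) (ℓ : ℝ) (hℓ : 0 < ℓ)
    (hc : 2 * Real.sqrt n * ℓ ≤ ‖c‖) :
    nuMeas n β (cubeC n c (2 * ℓ))
      ≤ ENNReal.ofReal (2 ^ n * ((5 : ℝ) / 2) ^ β) * nuMeas n β (cubeC n c ℓ) := by
  have hsn : 1 ≤ Real.sqrt n := by
    rw [show (1:ℝ) = Real.sqrt 1 by simp]
    exact Real.sqrt_le_sqrt (by exact_mod_cast hn)
  set s := Real.sqrt n with hs
  set a := ‖c‖ - s * ℓ with hadef
  set b := ‖c‖ + s * (ℓ / 2) with hbdef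
  have hsℓ : 0 < s * ℓ := by positivity
  have ha : 0 < a := by
    have h1 : s * ℓ < 2 * s * ℓ := by nlinarith
    simp only [hadef]; linarith
  have hb : 0 < b := by positivity
  have hba : b ≤ 5 / 2 * a := by
    simp only [hadef, hbdef]; nlinarith
  have hmeas2 := cubeC_measurable n c (2 * ℓ)
  have hmeas1 := cubeC_measurable n c ℓ
  have hupper : nuMeas n β (cubeC n c (2 * ℓ))
      ≤ ENNReal.ofReal (min 1 (a ^ (-β))) * (ENNReal.ofReal (2 * ℓ)) ^ n := by
    rw [nuMeas, withDensity_apply _ hmeas2]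
    calc ∫⁻ x in cubeC n c (2 * ℓ), ENNReal.ofReal (min 1 (‖x‖ ^ (-β)))
        ≤ ∫⁻ _x in cubeC n c (2 * ℓ), ENNReal.ofReal (min 1 (a ^ (-β))) := by
          refine setLIntegral_mono_ae (by measurability)
            (Filter.Eventually.of_forall fun x hx => ?_)
          refine ENNReal.ofReal_le_ofReal (min_le_min le_rfl ?_)
          have hxc := norm_sub_le_of_mem_cubeC n c (2 * ℓ) (by linarith) hx
          have hax : a ≤ ‖x‖ := by
            have h2 : ‖x - c‖ ≤ s * ℓ := by
              calc ‖x - c‖ ≤ s * (2 * ℓ / 2) := hxc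
                _ = s * ℓ := by ring
            have h3 : ‖c‖ - ‖x‖ ≤ ‖x - c‖ := by
              have h4 := abs_norm_sub_norm_le x c
              rw [abs_sub_le_iff] at h4
              linarith [h4.2]
            simp only [hadef]; linarith
          exact Real.rpow_le_rpow_of_nonpos ha hax (neg_nonpos.mpr hβ.le)
      _ = ENNReal.ofReal (min 1 (a ^ (-β))) * (ENNReal.ofReal (2 * ℓ)) ^ n := by
          rw [setLIntegral_const, cubeC_volume]
  have hlower : ENNReal.ofReal (min 1 (b ^ (-β))) * (ENNReal.ofReal ℓ) ^ n
      ≤ nuMeas n β (cubeC n c ℓ) := by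
    rw [nuMeas, withDensity_apply _ hmeas1]
    calc ENNReal.ofReal (min 1 (b ^ (-β))) * (ENNReal.ofReal ℓ) ^ n
        = ∫⁻ _x in cubeC n c ℓ, ENNReal.ofReal (min 1 (b ^ (-β))) := by
          rw [setLIntegral_const, cubeC_volume]
      _ ≤ ∫⁻ x in cubeC n c ℓ, ENNReal.ofReal (min 1 (‖x‖ ^ (-β))) := by
          refine setLIntegral_mono_ae (by measurability)
            (Filter.Eventually.of_forall fun x hx => ?_)
          refine ENNReal.ofReal_le_ofReal (min_le_min le_rfl ?_)
          have hxc := norm_sub_le_of_mem_cubeC n c ℓ hℓ.le hx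
          have hxb : ‖x‖ ≤ b := by
            calc ‖x‖ = ‖c + (x - c)‖ := by congr 1; abel
              _ ≤ ‖c‖ + ‖x - c‖ := norm_add_le _ _
              _ ≤ b := by simp only [hbdef]; linarith
          have hx0 : 0 < ‖x‖ := by
            have h5 : ‖c‖ - ‖x‖ ≤ ‖x - c‖ := by
              have h4 := abs_norm_sub_norm_le x c
              rw [abs_sub_le_iff] at h4
              linarith [h4.2]
            nlinarith
          exact Real.rpow_le_rpow_of_nonpos hx0 hxb (neg_nonpos.mpr hβ.le)
  refine hupper.trans (le_trans ?_ (mul_le_mul_right hlower _))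
  have h1 : ENNReal.ofReal (min 1 (a ^ (-β)))
      ≤ ENNReal.ofReal ((5/2:ℝ) ^ β) * ENNReal.ofReal (min 1 (b ^ (-β))) := by
    rw [← ENNReal.ofReal_mul (by positivity)]
    exact ENNReal.ofReal_le_ofReal (key_real β hβ ha hb hba)
  have h2 : (ENNReal.ofReal (2 * ℓ)) ^ n = 2 ^ n * (ENNReal.ofReal ℓ) ^ n := by
    rw [ENNReal.ofReal_mul (by norm_num), ENNReal.ofReal_ofNat, mul_pow]
  have h3 : ENNReal.ofReal (2 ^ n * ((5:ℝ)/2) ^ β)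
      = 2 ^ n * ENNReal.ofReal ((5/2:ℝ) ^ β) := by
    rw [ENNReal.ofReal_mul (by positivity), ENNReal.ofReal_pow (by norm_num),
      ENNReal.ofReal_ofNat]
  rw [h2, h3]
  calc ENNReal.ofReal (min 1 (a ^ (-β))) * (2 ^ n * (ENNReal.ofReal ℓ) ^ n)
      = 2 ^ n * (ENNReal.ofReal (min 1 (a ^ (-β))) * (ENNReal.ofReal ℓ) ^ n) := by ring
    _ ≤ 2 ^ n * ((ENNReal.ofReal ((5/2:ℝ) ^ β) * ENNReal.ofReal (min 1 (b ^ (-β))))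
          * (ENNReal.ofReal ℓ) ^ n) :=
        mul_le_mul_right (mul_le_mul_left h1 _) _
    _ = 2 ^ n * ENNReal.ofReal ((5/2:ℝ) ^ β)
          * (ENNReal.ofReal (min 1 (b ^ (-β))) * (ENNReal.ofReal ℓ) ^ n) := by ring
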